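/- Let n ≥ 1, let Vₙ be the vertex set of the n-dimensional lecture-hall simplex Pₙ, and let Q_{n+1} = conv(V_{n+1} \ {0_{n+1}}) where 0_{n+1} is the origin of ℝ^{n+1}. Then for every nonnegative integer t, |tPₙ ∩ ℤⁿ| = |tQ_{n+1} ∩ ℤ^{n+1}|; equivalently, Pₙ and Q_{n+1} are integrally equivalent. -/
import Mathlib


open scoped Pointwise

/-- The `n`-dimensional lecture-hall simplex
`Pₙ = {x ∈ ℝⁿ : 0 ≤ x₁ ≤ x₂/2 ≤ ⋯ ≤ xₙ/n ≤ 1}` (coordinates `1`-indexed). -/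
def lectureHall (n : ℕ) : Set (Fin n → ℝ) :=
  {x | (∀ i : Fin n, (i : ℕ) = 0 → 0 ≤ x i) ∧
    (∀ i j : Fin n, (j : ℕ) = (i : ℕ) + 1 →
      x i / ((i : ℕ) + 1) ≤ x j / ((j : ℕ) + 1)) ∧
    (∀ i : Fin n, (i : ℕ) = n - 1 → x i / (n : ℝ) ≤ 1)}

/-- The `k`-th vertex (for `0 ≤ k ≤ n`) of the `n`-dimensional lecture-hall
simplex: its last `k` coordinates agree with `(1, 2, …, n)` and the rest
are `0`. -/
def lhVertex (n k : ℕ) : Fin n → ℝ := fun i =>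
  if (i : ℕ) < n - k then 0 else (i : ℕ) + 1

lemma lh_convex (n : ℕ) : Convex ℝ (lectureHall n) := by
  intro x hx y hy a b ha hb hab
  obtain ⟨h1, h2, h3⟩ := hx
  obtain ⟨g1, g2, g3⟩ := hy
  refine ⟨fun i hi => ?_, fun i j hij => ?_, fun i hi => ?_⟩
  · have := h1 i hi; have := g1 i hi
    simp only [Pi.add_apply, Pi.smul_apply, smul_eq_mul]
    nlinarith
  · have hx' := h2 i j hij
    have hy' := g2 i j hij
    simp only [Pi.add_apply, Pi.smul_apply, smul_eq_mul]
    have e1 : (a * x i + b * y i) / ((i:ℕ)+1) = a * (x i / ((i:ℕ)+1)) + b * (y i / ((i:ℕ)+1)) := by ring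
    have e2 : (a * x j + b * y j) / ((j:ℕ)+1) = a * (x j / ((j:ℕ)+1)) + b * (y j / ((j:ℕ)+1)) := by ring
    rw [e1, e2]
    have := mul_le_mul_of_nonneg_left hx' ha
    have := mul_le_mul_of_nonneg_left hy' hb
    linarith
  · have hx' := h3 i hi
    have hy' := g3 i hi
    simp only [Pi.add_apply, Pi.smul_apply, smul_eq_mul]
    have e1 : (a * x i + b * y i) / (n:ℝ) = a * (x i / n) + b * (y i / n) := by ring
    rw [e1]
    nlinarith

lemma lhVertex_mem (n k : ℕ) : lhVertex n k ∈ lectureHall n := by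
  refine ⟨fun i hi => ?_, fun i j hij => ?_, fun i hi => ?_⟩
  · unfold lhVertex; split_ifs <;> positivity
  · unfold lhVertex
    split_ifs with hi hj hj
    · simp
    · rw [zero_div]
      positivity
    · omega
    · have h1 : ((i:ℕ):ℝ) + 1 ≠ 0 := by positivity
      have h2 : ((j:ℕ):ℝ) + 1 ≠ 0 := by positivity
      rw [div_self h1, div_self h2]
  · unfold lhVertex
    have hn : 0 < n := i.pos
    have : ((i:ℕ):ℝ) + 1 ≤ (n:ℝ) := by
      have : (i:ℕ) + 1 ≤ n := by omega
      exact_mod_cast this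
    split_ifs
    · rw [zero_div]; norm_num
    · rw [div_le_one (by exact_mod_cast hn)]; exact this

lemma tel (y : ℕ → ℝ) (n i : ℕ) (hi : i ≤ n) :
    ∑ j ∈ Finset.range (n+1), (if i < n - j then (0:ℝ) else y (n+1-j) - y (n-j))
      = y (i+1) - y 0 := by
  have h1 : ∀ j, (if i < n - j then (0:ℝ) else y (n+1-j) - y (n-j))
      = (if n - j ≤ i then y (n+1-j) - y (n-j) else 0) := by
    intro j; split_ifs with p q <;> first | rfl | omega
  simp only [h1]
  rw [← Finset.sum_filter]
  have h2 : (Finset.range (n+1)).filter (fun j => n - j ≤ i) = Finset.Ico (n-i) (n+1) := by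
    ext j
    simp only [Finset.mem_filter, Finset.mem_range, Finset.mem_Ico]
    omega
  rw [h2, Finset.sum_Ico_eq_sum_range]
  rw [show n + 1 - (n - i) = i + 1 from by omega]
  have h3 : ∀ j ∈ Finset.range (i+1),
      y (n+1-(n-i+j)) - y (n-(n-i+j)) = y ((i-j)+1) - y (i-j) := by
    intro j hj
    rw [Finset.mem_range] at hj
    rw [show n+1-(n-i+j) = (i-j)+1 from by omega, show n-(n-i+j) = i-j from by omega]
  rw [Finset.sum_congr rfl h3]
  have h4 := Finset.sum_range_reflect (fun j => y (j+1) - y j) (i+1)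
  simp only [Nat.add_sub_cancel] at h4
  rw [h4, Finset.sum_range_sub]

noncomputable def yfun (n : ℕ) (x : Fin n → ℝ) : ℕ → ℝ := fun j =>
  if h : 1 ≤ j ∧ j ≤ n then x ⟨j-1, by omega⟩ / j else if j = 0 then 0 else 1

lemma yfun_step (n : ℕ) (hn : 1 ≤ n) (x : Fin n → ℝ) (hx : x ∈ lectureHall n) (j : ℕ) :
    yfun n x j ≤ yfun n x (j+1) := by
  obtain ⟨h1, h2, h3⟩ := hx
  by_cases hj0 : j = 0
  · subst hj0
    have h0 := h1 ⟨0, by omega⟩ rfl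
    simp only [yfun]
    rw [dif_neg (by omega), if_pos trivial, dif_pos (by omega : 1 ≤ 0+1 ∧ 0+1 ≤ n)]
    have : ((0+1:ℕ):ℝ) = 1 := by norm_num
    rw [this, div_one]
    exact h0
  by_cases hj2 : j + 1 ≤ n
  · have key := h2 ⟨j-1, by omega⟩ ⟨j, by omega⟩ (by simp; omega)
    simp only [yfun]
    rw [dif_pos (by omega : 1 ≤ j ∧ j ≤ n), dif_pos (by omega : 1 ≤ j+1 ∧ j+1 ≤ n)]
    have e1 : ((j-1:ℕ):ℝ) + 1 = (j:ℝ) := by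
      rw [Nat.cast_sub (by omega : 1 ≤ j)]; push_cast; ring
    have e2 : ((j+1:ℕ):ℝ) = (j:ℝ) + 1 := by push_cast; ring
    simp only [Fin.val_mk] at key ⊢
    rw [e1] at key
    rw [e2]
    exact key
  by_cases hj3 : j = n
  · have key := h3 ⟨j-1, by omega⟩ (by simp [hj3])
    simp only [yfun]
    rw [dif_pos (by omega : 1 ≤ j ∧ j ≤ n), dif_neg (by omega), if_neg (by omega)]
    have e : (j:ℝ) = (n:ℝ) := by rw [hj3]
    rw [e]
    exact key
  · simp only [yfun]
    rw [dif_neg (by omega), if_neg hj0, dif_neg (by omega), if_neg (by omega)]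

lemma yfun_zero (n : ℕ) (x : Fin n → ℝ) : yfun n x 0 = 0 := by
  simp [yfun]

lemma yfun_top (n : ℕ) (x : Fin n → ℝ) (j : ℕ) (hj : n + 1 ≤ j) : yfun n x j = 1 := by
  simp only [yfun]
  rw [dif_neg (by omega), if_neg (by omega)]

lemma yfun_mid (n : ℕ) (x : Fin n → ℝ) (j : ℕ) (h1 : 1 ≤ j) (h2 : j ≤ n) :
    yfun n x j = x ⟨j-1, by omega⟩ / j := by
  simp only [yfun]
  rw [dif_pos ⟨h1, h2⟩]

lemma snoc_mem_hull (n : ℕ) (hn : 1 ≤ n) (x : Fin n → ℝ) (hx : x ∈ lectureHall n) :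
    Fin.snoc x ((n:ℝ)+1) ∈ convexHull ℝ
      ((Set.range fun k : Fin (n + 2) => lhVertex (n + 1) (k : ℕ)) \ {0}) := by
  set y : ℕ → ℝ := yfun n x with hy
  have hmono : ∀ j, y j ≤ y (j+1) := yfun_step n hn x hx
  set w : ℕ → ℝ := fun j => y (n+1-j) - y (n-j) with hw
  have hy0 : y 0 = 0 := yfun_zero n x
  have hy1 : ∀ j, n + 1 ≤ j → y j = 1 := yfun_top n x
  have hym : ∀ j (h1 : 1 ≤ j) (h2 : j ≤ n), y j = x ⟨j-1, by omega⟩ / j := yfun_mid n x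
  have hwnn : ∀ j ∈ Finset.range (n+1), 0 ≤ w j := by
    intro j hj
    rw [Finset.mem_range] at hj
    have : n + 1 - j = (n - j) + 1 := by omega
    simp only [hw, this]
    exact sub_nonneg.2 (hmono _)
  have hsum : ∑ j ∈ Finset.range (n+1), w j = 1 := by
    have h0 : ∀ j ∈ Finset.range (n+1), w j
        = (if n < n - j then (0:ℝ) else y (n+1-j) - y (n-j)) := by
      intro j hj
      rw [if_neg (by omega)]
    rw [Finset.sum_congr rfl h0, tel y n n le_rfl, hy0, hy1 (n+1) le_rfl]
    ring
  have hcomb : ∑ j ∈ Finset.range (n+1), w j • (lhVertex (n+1) (j+1))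
      = Fin.snoc x ((n:ℝ)+1) := by
    funext i
    rw [Finset.sum_apply]
    have hterm : ∀ j ∈ Finset.range (n+1),
        (w j • lhVertex (n+1) (j+1)) i
          = ((i:ℕ)+1 : ℝ) * (if (i:ℕ) < n - j then (0:ℝ) else y (n+1-j) - y (n-j)) := by
      intro j hj
      simp only [Pi.smul_apply, smul_eq_mul, lhVertex]
      rw [show n + 1 - (j+1) = n - j from by omega]
      split_ifs <;> ring
    rw [Finset.sum_congr rfl hterm, ← Finset.mul_sum,
      tel y n (i:ℕ) (by omega), hy0]
    refine Fin.lastCases ?_ (fun i' => ?_) i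
    · simp only [Fin.val_last, Fin.snoc_last]
      rw [hy1 (n+1) le_rfl]
      ring
    · simp only [Fin.coe_castSucc, Fin.snoc_castSucc]
      rw [hym ((i':ℕ)+1) (by omega) (by omega)]
      have hne : (((i':ℕ):ℝ)+1) ≠ 0 := by positivity
      have : ((((i':ℕ)+1:ℕ)):ℝ) = ((i':ℕ):ℝ) + 1 := by push_cast; ring
      rw [this, sub_zero]
      rw [mul_div_cancel₀ _ hne]
      congr 1
  rw [← hcomb, ← Finset.centerMass_eq_of_sum_1 _ _ hsum]
  apply Finset.centerMass_mem_convexHull _ hwnn (by rw [hsum]; norm_num)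
  intro j hj
  rw [Finset.mem_range] at hj
  constructor
  · exact ⟨⟨j+1, by omega⟩, rfl⟩
  · intro h0
    have := congrFun h0 ⟨n, by omega⟩
    simp only [lhVertex] at this
    rw [if_neg (by omega)] at this
    simp at this
    exact absurd this (by positivity)

lemma vertex_snoc (n k : ℕ) (hk : 1 ≤ k) :
    lhVertex (n+1) k = Fin.snoc (lhVertex n (k-1)) ((n:ℝ)+1) := by
  funext i
  refine Fin.lastCases ?_ (fun i' => ?_) i
  · rw [Fin.snoc_last]
    simp only [lhVertex, Fin.val_last]
    rw [if_neg (by omega)]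
  · rw [Fin.snoc_castSucc]
    simp only [lhVertex, Fin.coe_castSucc]
    rw [show n + 1 - k = n - (k-1) from by omega]

lemma image_convex (n : ℕ) :
    Convex ℝ ((fun x : Fin n → ℝ => (Fin.snoc x ((n:ℝ)+1) : Fin (n+1) → ℝ)) '' lectureHall n) := by
  rintro _ ⟨u, hu, rfl⟩ _ ⟨v, hv, rfl⟩ a b ha hb hab
  refine ⟨a • u + b • v, lh_convex n hu hv ha hb hab, ?_⟩
  show (Fin.snoc (a • u + b • v) ((n:ℝ)+1) : Fin (n+1) → ℝ)
      = a • (Fin.snoc u ((n:ℝ)+1) : Fin (n+1) → ℝ) + b • (Fin.snoc v ((n:ℝ)+1) : Fin (n+1) → ℝ)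
  funext i
  refine Fin.lastCases ?_ (fun i' => ?_) i
  · simp only [Pi.add_apply, Pi.smul_apply, smul_eq_mul, Fin.snoc_last]
    nlinarith [hab]
  · simp only [Pi.add_apply, Pi.smul_apply, smul_eq_mul, Fin.snoc_castSucc]

lemma hull_eq (n : ℕ) (hn : 1 ≤ n) :
    convexHull ℝ ((Set.range fun k : Fin (n + 2) => lhVertex (n + 1) (k : ℕ)) \ {0})
      = (fun x : Fin n → ℝ => Fin.snoc x ((n:ℝ)+1)) '' lectureHall n := by
  apply Set.Subset.antisymm
  · apply convexHull_min ?_ (image_convex n)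
    rintro v ⟨⟨k, rfl⟩, hv0⟩
    simp only [Set.mem_singleton_iff] at hv0
    show lhVertex (n+1) (k:ℕ) ∈ _
    by_cases hk : (k:ℕ) = 0
    · exfalso
      apply hv0
      funext i
      simp only [lhVertex, hk, Pi.zero_apply]
      rw [if_pos (by omega)]
    · rw [vertex_snoc n (k:ℕ) (by omega)]
      exact ⟨_, lhVertex_mem n ((k:ℕ)-1), rfl⟩
  · rintro _ ⟨x, hx, rfl⟩
    exact snoc_mem_hull n hn x hx

lemma smul_snoc (n : ℕ) (t c : ℝ) (x : Fin n → ℝ) :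
    t • (Fin.snoc x c : Fin (n+1) → ℝ) = Fin.snoc (t • x) (t * c) := by
  funext i
  refine Fin.lastCases ?_ (fun i' => ?_) i
  · simp [Fin.snoc_last]
  · simp [Fin.snoc_castSucc]

/-- Let `n ≥ 1`, let `Vₙ` be the vertex set of the
lecture-hall simplex `Pₙ`, and let `Q_{n+1} = conv(V_{n+1} \ {0})`.  Then
for every nonnegative integer `t`, the `t`-th dilates of `Pₙ` and of
`Q_{n+1}` contain the same number of integer points; i.e. `Pₙ` and
`Q_{n+1}` are integrally equivalent. -/
theorem lectureHall_eq_Q_lattice_count (n : ℕ) (hn : 1 ≤ n) (t : ℕ) :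
    Set.ncard {x ∈ (t : ℝ) • lectureHall n | ∀ i, ∃ z : ℤ, x i = (z : ℝ)} =
    Set.ncard {x ∈ (t : ℝ) • convexHull ℝ
        ((Set.range fun k : Fin (n + 2) => lhVertex (n + 1) (k : ℕ)) \ {0}) |
      ∀ i, ∃ z : ℤ, x i = (z : ℝ)} := by
  set c : ℝ := (t:ℝ) * ((n:ℝ)+1) with hc
  set f : (Fin n → ℝ) → (Fin (n+1) → ℝ) := fun x => Fin.snoc x c with hf
  have hQ : (t:ℝ) • convexHull ℝ
      ((Set.range fun k : Fin (n + 2) => lhVertex (n + 1) (k : ℕ)) \ {0})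
      = f '' ((t:ℝ) • lectureHall n) := by
    rw [hull_eq n hn, ← Set.image_smul, Set.image_image,
      ← Set.image_smul, Set.image_image]
    apply Set.image_congr'
    intro x
    rw [smul_snoc]
  have hinj : Function.Injective f := by
    intro a b h
    funext i
    have := congrFun h i.castSucc
    simpa only [hf, Fin.snoc_castSucc] using this
  have hsets : {x ∈ (t : ℝ) • convexHull ℝ
        ((Set.range fun k : Fin (n + 2) => lhVertex (n + 1) (k : ℕ)) \ {0}) |
      ∀ i, ∃ z : ℤ, x i = (z : ℝ)}
      = f '' {x ∈ (t : ℝ) • lectureHall n | ∀ i, ∃ z : ℤ, x i = (z : ℝ)} := by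
    rw [hQ]
    ext y
    constructor
    · rintro ⟨⟨x, hx, rfl⟩, hlat⟩
      refine ⟨x, ⟨hx, fun i => ?_⟩, rfl⟩
      have := hlat i.castSucc
      simpa only [hf, Fin.snoc_castSucc] using this
    · rintro ⟨x, ⟨hx, hlat⟩, rfl⟩
      refine ⟨⟨x, hx, rfl⟩, fun i => ?_⟩
      refine Fin.lastCases ?_ (fun i' => ?_) i
      · refine ⟨(t : ℤ) * ((n:ℤ)+1), ?_⟩
        simp only [hf, Fin.snoc_last, hc]
        push_cast
        ring
      · simp only [hf, Fin.snoc_castSucc]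
        exact hlat i'
  rw [hsets, Set.ncard_image_of_injective _ hinj]
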